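/- arXiv:1503.02919 — 2 statements merged into one kernel-verified Lean document; each statement's English description precedes it below -/
import Mathlib

section
/- The shift operators on the Gauss–Manin system, given by multiplication by w^{Ψ(k)}, satisfy: (i) w^{Ψ(k)} ∘ w^{Ψ(l)} = Q^{d(k,l)} w^{Ψ(k+l)}; (ii) w^{Ψ(k)} ∘ f(Q,y,λ) = f(Q,y,λ−kz) ∘ w^{Ψ(k)} for any f ∈ ℂ[[Q]][[y]][λ], where the λ-action is the one induced by the relation (zd+dF_λ∧)ω_i ≡ 0; (iii) w^{Ψ(k)} commutes with ∇_{∂/∂y_l} and with the grading operator Gr. -/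
open Finset
open scoped Classical

/-- Membership in the cone spanned by the rays indexed by `I`,
with nonnegative integer coefficients. -/
def InCone {D m : ℕ} (b : Fin m → Fin D → ℤ) (I : Finset (Fin m)) (k : Fin D → ℤ) : Prop :=
  ∃ c : Fin m → ℕ, (∀ i, c i ≠ 0 → i ∈ I) ∧ k = ∑ i, (c i : ℤ) • b i

/-- A smooth (simplicial, with smooth cones) fan in `ℤ^D`, recorded combinatorially:
`b` are the primitive ray generators, `cones` the index sets of cones. -/
structure SmoothFan (D m : ℕ) where
  b : Fin m → Fin D → ℤ
  cones : Finset (Finset (Fin m))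
  empty_mem : ∅ ∈ cones
  ray_mem : ∀ i : Fin m, {i} ∈ cones
  downward : ∀ I ∈ cones, ∀ J ⊆ I, J ∈ cones
  smooth : ∀ I ∈ cones,
    LinearIndependent ℚ (fun i : {x // x ∈ I} => fun j => (b i.1 j : ℚ))
  inter : ∀ I ∈ cones, ∀ J ∈ cones, ∀ k, InCone b I k → InCone b J k → InCone b (I ∩ J) k
  convex : ∀ k l, (∃ I ∈ cones, InCone b I k) → (∃ J ∈ cones, InCone b J l) →
      ∃ K ∈ cones, InCone b K (k + l)

/-- `k` is a lattice point of the support `|Σ|` of the fan. -/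
def SmoothFan.InSupport {D m : ℕ} (F : SmoothFan D m) (k : Fin D → ℤ) : Prop :=
  ∃ I ∈ F.cones, InCone F.b I k

/-- The coefficient vector `Ψ(k) ∈ (ℤ_{≥0})^m` of a lattice point of the support. -/
noncomputable def SmoothFan.Psi {D m : ℕ} (F : SmoothFan D m) (k : Fin D → ℤ) : Fin m → ℕ :=
  if h : ∃ c : Fin m → ℕ, (∃ I ∈ F.cones, ∀ i, c i ≠ 0 → i ∈ I) ∧
      k = ∑ i, (c i : ℤ) • F.b i
  then h.choose else 0

/-- `d(k,l) = Ψ(k) + Ψ(l) − Ψ(k+l)`. -/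
noncomputable def SmoothFan.dEff {D m : ℕ} (F : SmoothFan D m) (k l : Fin D → ℤ) :
    Fin m → ℤ :=
  fun i => (F.Psi k i : ℤ) + (F.Psi l i : ℤ) - (F.Psi (k + l) i : ℤ)

/-- The map `ℤ^m → N`, `e_j ↦ b_j` (third arrow of the fan sequence). -/
def SmoothFan.toN {D m : ℕ} (F : SmoothFan D m) (v : Fin m → ℤ) : Fin D → ℤ :=
  ∑ j, v j • F.b j

/-- The set of effective curve classes `L ∩ Σ_{σ_I ∈ Σ} C_I`, where
`C_I = {d ∈ L ⊗ ℚ : d_i ≥ 0 for i ∉ I}`. -/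
def SmoothFan.EffSet {D m : ℕ} (F : SmoothFan D m) : Set (Fin m → ℤ) :=
  {v | F.toN v = 0 ∧
    ∃ f : Finset (Fin m) → (Fin m → ℚ),
      ((fun i => (v i : ℚ)) = ∑ I ∈ F.cones, f I) ∧
      ∀ I ∈ F.cones,
        ((∑ j, f I j • (fun t => (F.b j t : ℚ))) = 0) ∧ (∀ i ∉ I, 0 ≤ f I i)}

/-- `Eff(X_Σ)` as an additive submonoid (the semigroup generated by effective classes). -/
def SmoothFan.EffM {D m : ℕ} (F : SmoothFan D m) : AddSubmonoid (Fin m → ℤ) :=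
  AddSubmonoid.closure F.EffSet

/-- `(ℤ_{≥0})^m` as a submonoid of `ℤ^m`. -/
def nonnegM (m : ℕ) : AddSubmonoid (Fin m → ℤ) where
  carrier := {a | ∀ i, 0 ≤ a i}
  zero_mem' := fun _ => le_rfl
  add_mem' := fun ha hb i => add_nonneg (ha i) (hb i)

/-- The semigroup `M = Eff(X_Σ) + (ℤ_{≥0})^m ⊆ ℤ^m`. -/
def SmoothFan.Mmon {D m : ℕ} (F : SmoothFan D m) : AddSubmonoid (Fin m → ℤ) :=
  F.EffM ⊔ nonnegM m

/-- The semigroup `N ∩ |Σ|` of lattice points of the (convex) support. -/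
def SmoothFan.SuppM {D m : ℕ} (F : SmoothFan D m) : AddSubmonoid (Fin D → ℤ) :=
  AddSubmonoid.closure {k | F.InSupport k}

/-- `β(k) = Ψ(k) − ς(k)`, for a splitting `ς` of the fan sequence. -/
noncomputable def SmoothFan.beta {D m : ℕ} (F : SmoothFan D m)
    (ς : (Fin D → ℤ) →+ (Fin m → ℤ)) (k : Fin D → ℤ) : Fin m → ℤ :=
  (fun i => (F.Psi k i : ℤ)) - ς k


/-- Index of a monomial `Q^q · y^{yexp} · z^{zexp} · x^{xexp}` of the λ-free presentation
`GM(F_λ) ≅ ℂ[z]{M}[[y]]·ω` of the Gauss–Manin system. -/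
structure GMIdx0 (D m : ℕ) where
  q : Fin m → ℤ
  y : (Fin D → ℤ) →₀ ℕ
  z : ℕ
  x : Fin D → ℤ

namespace GMIdx0

variable {D m : ℕ}

/-- Multiplication by `z`. -/
def Zmul (g : GMIdx0 D m → ℂ) : GMIdx0 D m → ℂ :=
  fun p => if p.z = 0 then 0 else g {p with z := p.z - 1}

/-- Multiplication by `Q^d`. -/
def Qmul (d : Fin m → ℤ) (g : GMIdx0 D m → ℂ) : GMIdx0 D m → ℂ :=
  fun p => g {p with q := p.q - d}

/-- The shift operator: multiplication by `w^{Ψ(k)} = Q^{β(k)} x^k`. -/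
noncomputable def Wmul (F : SmoothFan D m) (ς : (Fin D → ℤ) →+ (Fin m → ℤ))
    (k : Fin D → ℤ) (g : GMIdx0 D m → ℂ) : GMIdx0 D m → ℂ :=
  fun p => g {p with q := p.q - F.beta ς k, x := p.x - k}

/-- Multiplication by the deformation variable `y_k`. -/
noncomputable def Ymul (k : Fin D → ℤ) (g : GMIdx0 D m → ℂ) : GMIdx0 D m → ℂ :=
  fun p => if p.y k = 0 then 0 else g {p with y := p.y - Finsupp.single k 1}

/-- The logarithmic vector field `x_i ∂/∂x_i`. -/
def Xlog (i : Fin D) (g : GMIdx0 D m → ℂ) : GMIdx0 D m → ℂ :=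
  fun p => (p.x i : ℂ) * g p

open scoped Classical in
/-- Multiplication by `x_i ∂F/∂x_i = Σ_k k_i y_k w^{Ψ(k)}`. -/
noncomputable def FmulX (F : SmoothFan D m) (ς : (Fin D → ℤ) →+ (Fin m → ℤ))
    (i : Fin D) (g : GMIdx0 D m → ℂ) : GMIdx0 D m → ℂ :=
  fun p => ∑ k ∈ p.y.support,
    if F.InSupport k then
      (k i : ℂ) * g {p with q := p.q - F.beta ς k, y := p.y - Finsupp.single k 1,
                            x := p.x - k}
    else 0

/-- The action of the equivariant parameter `λ_i` on the λ-free presentation, induced by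
the relation `(zd + dF_λ∧)ω_i ≡ 0`: `λ_i = z x_i∂_i + (x_i∂_iF)·`. -/
noncomputable def Lop (F : SmoothFan D m) (ς : (Fin D → ℤ) →+ (Fin m → ℤ))
    (i : Fin D) (g : GMIdx0 D m → ℂ) : GMIdx0 D m → ℂ :=
  Zmul (Xlog i g) + FmulX F ς i g

/-- The formal partial derivative `∂/∂y_k`. -/
noncomputable def Ypartial (k : Fin D → ℤ) (g : GMIdx0 D m → ℂ) : GMIdx0 D m → ℂ :=
  fun p => ((p.y k + 1 : ℕ) : ℂ) * g {p with y := p.y + Finsupp.single k 1}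

/-- `z∇_{∂/∂y_k} = z ∂/∂y_k + w^{Ψ(k)}·`, the Gauss–Manin connection (rescaled). -/
noncomputable def ZNabla (F : SmoothFan D m) (ς : (Fin D → ℤ) →+ (Fin m → ℤ))
    (k : Fin D → ℤ) (g : GMIdx0 D m → ℂ) : GMIdx0 D m → ℂ :=
  Zmul (Ypartial k g) + Wmul F ς k g

/-- The grading operator `Gr = E_y + z∂/∂z + Σ_i λ_i ∂/∂λ_i` (on λ-free elements). -/
def Gr (g : GMIdx0 D m → ℂ) : GMIdx0 D m → ℂ :=
  fun p => (((p.y.sum fun _ n => n) + p.z : ℕ) : ℂ) * g p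

end GMIdx0

open GMIdx0 in
/-- the shift operators `w^{Ψ(k)}` on the Gauss–Manin system satisfy:
(i) `w^{Ψ(k)} ∘ w^{Ψ(l)} = Q^{d(k,l)} w^{Ψ(k+l)}`;
(ii) `w^{Ψ(k)} ∘ f(Q,y,λ) = f(Q,y,λ−kz) ∘ w^{Ψ(k)}`, on the multiplicative generators:
`w^{Ψ(k)}` commutes with `Q^d` and `y_j`, and `w^{Ψ(k)} ∘ λ_i = (λ_i − k_i z) ∘ w^{Ψ(k)}`
for the induced `λ_i`-action;
(iii) `w^{Ψ(k)}` commutes with the Gauss–Manin connection `∇_{∂/∂y_l}` and with the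
grading operator `Gr`. -/
theorem shift_operators_on_gauss_manin {D m : ℕ} (F : SmoothFan D m)
    (I₀ : Finset (Fin m)) (hI₀ : I₀ ∈ F.cones) (hcard : I₀.card = D)
    (ς : (Fin D → ℤ) →+ (Fin m → ℤ))
    (hsec : ∀ v : Fin D → ℤ, F.toN (ς v) = v)
    (hς : ∀ i ∈ I₀, ς (F.b i) = Pi.single i 1)
    (k : Fin D → ℤ) (hk : F.InSupport k) :
    (∀ l : Fin D → ℤ, F.InSupport l →
      Wmul F ς k ∘ Wmul F ς l = Qmul (F.dEff k l) ∘ Wmul F ς (k + l)) ∧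
    (∀ d : Fin m → ℤ, Wmul F ς k ∘ Qmul d = Qmul d ∘ Wmul F ς k) ∧
    (∀ j : Fin D → ℤ, Wmul F ς k ∘ Ymul j = Ymul j ∘ Wmul F ς k) ∧
    (∀ i : Fin D, ∀ g : GMIdx0 D m → ℂ,
      Wmul F ς k (Lop F ς i g) =
        Lop F ς i (Wmul F ς k g) - (k i : ℂ) • Zmul (Wmul F ς k g)) ∧
    (∀ l : Fin D → ℤ, F.InSupport l →
      Wmul F ς k ∘ ZNabla F ς l = ZNabla F ς l ∘ Wmul F ς k) ∧
    (Wmul F ς k ∘ Gr = Gr ∘ Wmul F ς k) := by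
  refine ⟨?_, ?_, ?_, ?_, ?_, ?_⟩
  · intro l _
    funext g p
    simp only [Function.comp_apply, Wmul, Qmul]
    congr 1
    have hq : p.q - F.beta ς k - F.beta ς l = p.q - F.dEff k l - F.beta ς (k + l) := by
      funext i
      simp only [SmoothFan.dEff, SmoothFan.beta, map_add, Pi.sub_apply, Pi.add_apply]
      ring
    have hx : p.x - k - l = p.x - (k + l) := by
      funext i; simp [sub_sub]
    simp [hq, hx]
  · intro d
    funext g p
    simp only [Function.comp_apply, Wmul, Qmul]
    congr 1
    simp [sub_right_comm]
  · intro j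
    funext g p
    simp only [Function.comp_apply, Wmul, Ymul]
  · intro i g
    funext p
    have hswap : ∀ (j : Fin D → ℤ) (yy : (Fin D → ℤ) →₀ ℕ) (zz : ℕ),
        (⟨p.q - F.beta ς k - F.beta ς j, yy, zz, p.x - k - j⟩ : GMIdx0 D m) =
        ⟨p.q - F.beta ς j - F.beta ς k, yy, zz, p.x - j - k⟩ := by
      intro j yy zz
      rw [sub_right_comm, sub_right_comm p.x]
    simp only [Wmul, Lop, Pi.add_apply, Pi.sub_apply, Pi.smul_apply, smul_eq_mul,
      Zmul, Xlog, FmulX]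
    have hsum : (∑ j ∈ p.y.support, if F.InSupport j then
          (j i : ℂ) * g ⟨p.q - F.beta ς k - F.beta ς j,
            p.y - Finsupp.single j 1, p.z, p.x - k - j⟩ else 0)
        = ∑ j ∈ p.y.support, if F.InSupport j then
          (j i : ℂ) * g ⟨p.q - F.beta ς j - F.beta ς k,
            p.y - Finsupp.single j 1, p.z, p.x - j - k⟩ else 0 :=
      Finset.sum_congr rfl fun j _ => by rw [hswap]
    rw [hsum]
    by_cases hz : p.z = 0
    · rw [if_pos hz, if_pos hz, if_pos hz]; ring
    · rw [if_neg hz, if_neg hz, if_neg hz]; push_cast; ring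
  · intro l _
    funext g p
    have hswap : ∀ (yy : (Fin D → ℤ) →₀ ℕ) (zz : ℕ),
        (⟨p.q - F.beta ς k - F.beta ς l, yy, zz, p.x - k - l⟩ : GMIdx0 D m) =
        ⟨p.q - F.beta ς l - F.beta ς k, yy, zz, p.x - l - k⟩ := by
      intro yy zz
      rw [sub_right_comm, sub_right_comm p.x]
    simp only [Function.comp_apply, Wmul, ZNabla, Pi.add_apply, Zmul, Ypartial]
    rw [hswap]
  · funext g p
    simp only [Function.comp_apply, Wmul, Gr]
end

section
/- Let R be a complete Hausdorff linearly topologized ring, I ⊆ R an ideal such that every neighbourhood of 0 contains some power I^n, and let V be a continuous derivation of R[[x]] (countably many variables) with V(x_n) ∈ I[[x]] for all n and V(x_n) → 0. Then for every φ ∈ R[[x]], the series exp(V)(φ) = Σ_{k≥0} V^k(φ)/k! converges in R[[x]], and φ ↦ exp(V)(φ) is a continuous ring automorphism of R[[x]] with inverse exp(−V). -/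
open Filter

/-- The coefficient-wise (product) topology on multivariate formal power series,
matching the paper's topology on `R[[x]]` (coefficient-wise convergence). -/
noncomputable instance mvPowerSeriesPiTopology (σ R : Type*) [TopologicalSpace R] :
    TopologicalSpace (MvPowerSeries σ R) :=
  inferInstanceAs (TopologicalSpace ((σ →₀ ℕ) → R))

noncomputable instance powerSeriesPiTopology (R : Type*) [TopologicalSpace R] :
    TopologicalSpace (PowerSeries R) :=
  inferInstanceAs (TopologicalSpace (MvPowerSeries Unit R))

/-- `R` is linearly topologized: the ideals contained in a given neighbourhood of `0`
form a fundamental system of neighbourhoods of `0`. -/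
def LinearlyTopologized (R : Type*) [Ring R] [TopologicalSpace R] : Prop :=
  ∀ S ∈ nhds (0 : R), ∃ I : Ideal R, (I : Set R) ⊆ S ∧ (I : Set R) ∈ nhds (0 : R)

set_option linter.unusedSectionVars false
set_option linter.unusedVariables false
set_option maxHeartbeats 1000000
namespace ExpAux
variable {R : Type*} [CommRing R] [TopologicalSpace R] [IsTopologicalRing R]

instance : IsTopologicalAddGroup (MvPowerSeries ℕ R) :=
  inferInstanceAs (IsTopologicalAddGroup ((ℕ →₀ ℕ) → R))

instance [T2Space R] : T2Space (MvPowerSeries ℕ R) :=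
  inferInstanceAs (T2Space ((ℕ →₀ ℕ) → R))

instance [T2Space R] : T3Space (MvPowerSeries ℕ R) :=
  inferInstanceAs (T3Space ((ℕ →₀ ℕ) → R))

lemma continuous_coeff (d : ℕ →₀ ℕ) :
    Continuous (fun f : MvPowerSeries ℕ R => MvPowerSeries.coeff d f) :=
  continuous_apply d

lemma hasSum_coeff_iff {α : Type*} (F : α → MvPowerSeries ℕ R) (s : MvPowerSeries ℕ R) :
    HasSum F s ↔ ∀ d : ℕ →₀ ℕ, HasSum (fun i => MvPowerSeries.coeff d (F i)) (MvPowerSeries.coeff d s) :=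
  Pi.hasSum

lemma hasSum_monomials (ψ : MvPowerSeries ℕ R) :
    HasSum (fun d : ℕ →₀ ℕ => MvPowerSeries.monomial d (MvPowerSeries.coeff d ψ)) ψ := by
  rw [hasSum_coeff_iff]
  intro e
  simp only [MvPowerSeries.coeff_monomial]
  have : (fun i : ℕ →₀ ℕ => if e = i then MvPowerSeries.coeff i ψ else 0)
      = (fun i => if i = e then MvPowerSeries.coeff e ψ else 0) := by
    funext i
    by_cases h : e = i
    · subst h; simp
    · simp [h, Ne.symm h]
  rw [this]
  exact hasSum_ite_eq e _

lemma continuous_mul_right' (g : MvPowerSeries ℕ R) :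
    Continuous (fun f : MvPowerSeries ℕ R => f * g) := by
  apply continuous_pi
  intro d
  have : ∀ f : MvPowerSeries ℕ R, (f * g) d =
      ∑ p ∈ Finset.HasAntidiagonal.antidiagonal d, MvPowerSeries.coeff p.1 f * MvPowerSeries.coeff p.2 g := by
    intro f; exact MvPowerSeries.coeff_mul d f g
  simp only [this]
  exact continuous_finset_sum _ fun p _ => ((continuous_apply p.1).mul continuous_const)

lemma continuous_mul_left' (g : MvPowerSeries ℕ R) :
    Continuous (fun f : MvPowerSeries ℕ R => g * f) := by
  simpa [mul_comm] using continuous_mul_right' g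

lemma continuous_smul_q [Algebra ℚ R] (q : ℚ) :
    Continuous (fun f : MvPowerSeries ℕ R => q • f) := by
  apply continuous_pi
  intro d
  have : ∀ f : MvPowerSeries ℕ R, (q • f) d = q • (f d) := fun f => rfl
  simp only [this]
  exact (continuous_apply d).const_smul q
section C
variable {R : Type*} [CommRing R] [UniformSpace R] [IsUniformAddGroup R]
  [CompleteSpace R] [IsTopologicalRing R] {I : Ideal R}

lemma mem_cl_mul {j k : ℕ} {x y : R} (hx : x ∈ (I ^ j).closure) (hy : y ∈ (I ^ k).closure) :
    x * y ∈ (I ^ (j + k)).closure := by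
  have h : ∀ a ∈ ((I ^ j : Ideal R) : Set R), ∀ b ∈ ((I ^ k : Ideal R) : Set R),
      a * b ∈ ((I ^ (j + k) : Ideal R) : Set R) := by
    intro a ha b hb
    rw [pow_add]
    exact Ideal.mul_mem_mul ha hb
  exact map_mem_closure₂ continuous_mul hx hy h

lemma smul_mem_cl [Algebra ℚ R] (q : ℚ) {k : ℕ} {x : R} (hx : x ∈ (I ^ k).closure) :
    q • x ∈ (I ^ k).closure := by
  rw [Algebra.smul_def]
  exact Ideal.mul_mem_left _ _ hx

lemma nonarch (hlin : LinearlyTopologized R) : NonarchimedeanAddGroup R := by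
  constructor
  intro U hU
  obtain ⟨K, hKU, hK⟩ := hlin U hU
  exact ⟨⟨K.toAddSubgroup, AddSubgroup.isOpen_of_mem_nhds _ hK⟩, hKU⟩

lemma tendsto_zero_of_mem_cl (hlin : LinearlyTopologized R)
    (hI : ∀ S ∈ nhds (0 : R), ∃ n : ℕ, ((I ^ n : Ideal R) : Set R) ⊆ S)
    {α : Type*} {f : α → R} {w : α → ℕ}
    (hm : ∀ i, f i ∈ (I ^ (w i)).closure) (hw : Tendsto w cofinite atTop) :
    Tendsto f cofinite (nhds 0) := by
  rw [Filter.tendsto_def]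
  intro U hU
  obtain ⟨K, hKU, hK⟩ := hlin U hU
  have hKopen : IsOpen (K : Set R) := AddSubgroup.isOpen_of_mem_nhds K.toAddSubgroup hK
  have hKclosed : IsClosed (K : Set R) :=
    (OpenAddSubgroup.mk K.toAddSubgroup hKopen).isClosed
  obtain ⟨n, hn⟩ := hI K hK
  filter_upwards [hw (Filter.mem_atTop n)] with i hi
  refine Set.mem_preimage.mpr (hKU ?_)
  refine closure_minimal hn hKclosed ?_
  exact closure_mono (Ideal.pow_le_pow_right hi) (hm i)

lemma hasSum_mem_ideal {α : Type*} {f : α → R} {a : R} (hf : HasSum f a) (J : Ideal R)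
    (hJc : IsClosed (J : Set R)) (h : ∀ i, f i ∈ J) : a ∈ J :=
  hJc.mem_of_tendsto hf (Filter.Eventually.of_forall fun s => sum_mem fun i _ => h i)

lemma isClosed_cl (k : ℕ) : IsClosed (((I ^ k).closure : Ideal R) : Set R) := by
  rw [Ideal.coe_closure]; exact isClosed_closure
end C
section E
variable {R : Type*} [CommRing R] [TopologicalSpace R] [IsTopologicalRing R] {I : Ideal R}
  (V : Derivation R (MvPowerSeries ℕ R) (MvPowerSeries ℕ R))

lemma coeff_mul_mem (J : Ideal R) {g : MvPowerSeries ℕ R}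
    (hg : ∀ e, MvPowerSeries.coeff e g ∈ J) (f : MvPowerSeries ℕ R) (e : ℕ →₀ ℕ) :
    MvPowerSeries.coeff e (f * g) ∈ J := by
  rw [MvPowerSeries.coeff_mul]
  exact Submodule.sum_mem _ fun p _ => Ideal.mul_mem_left _ _ (hg p.2)

lemma coeff_D_monomial
    (hVI : ∀ n : ℕ, ∀ d : ℕ →₀ ℕ, MvPowerSeries.coeff d (V (MvPowerSeries.X n)) ∈ I)
    (d : ℕ →₀ ℕ) : ∀ e, MvPowerSeries.coeff e (V (MvPowerSeries.monomial d 1)) ∈ I := by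
  induction d using Finsupp.induction with
  | zero =>
    intro e
    have : (MvPowerSeries.monomial (0 : ℕ →₀ ℕ) (1 : R)) = 1 := rfl
    rw [this, V.map_one_eq_zero]
    simp
  | single_add a b f hfa hb ih =>
    intro e
    have hsplit : MvPowerSeries.monomial (Finsupp.single a b + f) (1 : R)
        = (MvPowerSeries.X a ^ b) * MvPowerSeries.monomial f 1 := by
      rw [MvPowerSeries.X_pow_eq, MvPowerSeries.monomial_mul_monomial, one_mul]
    have hXpow : ∀ e, MvPowerSeries.coeff e (V (MvPowerSeries.X a ^ b)) ∈ I := by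
      intro e
      rw [Derivation.leibniz_pow, map_nsmul]
      refine nsmul_mem ?_ b
      rw [smul_eq_mul]
      exact coeff_mul_mem I (fun e => hVI a e) _ e
    rw [hsplit, Derivation.leibniz, smul_eq_mul, smul_eq_mul, map_add]
    refine add_mem (coeff_mul_mem _ ih _ _) (coeff_mul_mem _ hXpow _ _)
end E

section F
variable {R : Type*} [CommRing R] [UniformSpace R] [IsUniformAddGroup R]
  [CompleteSpace R] [IsTopologicalRing R] {I : Ideal R}

lemma exists_hasSum (hlin : LinearlyTopologized R)
    (hI : ∀ S ∈ nhds (0 : R), ∃ n : ℕ, ((I ^ n : Ideal R) : Set R) ⊆ S)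
    {α : Type*} (F : α → MvPowerSeries ℕ R) (w : α → ℕ)
    (hF : ∀ i d, MvPowerSeries.coeff d (F i) ∈ (I ^ (w i)).closure)
    (hw : Tendsto w cofinite atTop) : ∃ s, HasSum F s := by
  letI := nonarch hlin
  have hsum : ∀ d : ℕ →₀ ℕ, Summable fun i => MvPowerSeries.coeff d (F i) := fun d =>
    NonarchimedeanAddGroup.summable_of_tendsto_cofinite_zero
      (tendsto_zero_of_mem_cl hlin hI (fun i => hF i d) hw)
  refine ⟨(fun d => ∑' i, MvPowerSeries.coeff d (F i) : MvPowerSeries ℕ R), ?_⟩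
  apply (hasSum_coeff_iff _ _).mpr
  intro d
  exact (hsum d).hasSum

lemma coeff_hasSum_mem {α : Type*} {F : α → MvPowerSeries ℕ R} {s : MvPowerSeries ℕ R}
    (h : HasSum F s) (d : ℕ →₀ ℕ) (J : Ideal R) (hJc : IsClosed (J : Set R))
    (hm : ∀ i, MvPowerSeries.coeff d (F i) ∈ J) : MvPowerSeries.coeff d s ∈ J :=
  hasSum_mem_ideal ((hasSum_coeff_iff F s).mp h d) J hJc hm

variable (V : Derivation R (MvPowerSeries ℕ R) (MvPowerSeries ℕ R))

lemma coeff_D_step (hVcont : Continuous V)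
    (hVI : ∀ n : ℕ, ∀ d : ℕ →₀ ℕ, MvPowerSeries.coeff d (V (MvPowerSeries.X n)) ∈ I)
    (k : ℕ) (ψ : MvPowerSeries ℕ R)
    (hψ : ∀ d, MvPowerSeries.coeff d ψ ∈ (I ^ k).closure) :
    ∀ d, MvPowerSeries.coeff d (V ψ) ∈ (I ^ (k + 1)).closure := by
  intro e
  have h1 := hasSum_monomials ψ
  have h2 : HasSum (fun d => V (MvPowerSeries.monomial d (MvPowerSeries.coeff d ψ))) (V ψ) :=
    h1.map V.toLinearMap.toAddMonoidHom hVcont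
  refine coeff_hasSum_mem h2 e _ (isClosed_cl (k + 1)) ?_
  intro d
  have hmon : MvPowerSeries.monomial d (MvPowerSeries.coeff d ψ)
      = (MvPowerSeries.coeff d ψ) • MvPowerSeries.monomial d (1 : R) := by
    rw [← (MvPowerSeries.monomial d).map_smul, smul_eq_mul, mul_one]
  rw [hmon, Derivation.map_smul, MvPowerSeries.coeff_smul]
  have hy : MvPowerSeries.coeff e (V (MvPowerSeries.monomial d 1)) ∈ (I ^ 1).closure := by
    rw [pow_one]
    exact subset_closure (coeff_D_monomial V hVI d e)
  exact mem_cl_mul (I := I) (hψ d) hy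

lemma coeff_D_iter (hVcont : Continuous V)
    (hVI : ∀ n : ℕ, ∀ d : ℕ →₀ ℕ, MvPowerSeries.coeff d (V (MvPowerSeries.X n)) ∈ I)
    (l : ℕ) (k : ℕ) (ψ : MvPowerSeries ℕ R)
    (hψ : ∀ d, MvPowerSeries.coeff d ψ ∈ (I ^ k).closure) :
    ∀ d, MvPowerSeries.coeff d ((⇑V)^[l] ψ) ∈ (I ^ (k + l)).closure := by
  induction l generalizing k ψ with
  | zero => simpa using hψ
  | succ l ih =>
    intro d
    rw [Function.iterate_succ_apply]
    have := ih (k + 1) (V ψ) (coeff_D_step V hVcont hVI k ψ hψ) d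
    have harith : k + 1 + l = k + (l + 1) := by omega
    rwa [harith] at this

lemma coeff_mem_cl_zero (ψ : MvPowerSeries ℕ R) (d : ℕ →₀ ℕ) :
    MvPowerSeries.coeff d ψ ∈ ((I ^ 0 : Ideal R)).closure := by
  refine subset_closure ?_
  simp [Ideal.one_eq_top]

end F

section DerIter
variable {R A : Type*} [CommRing R] [CommRing A] [Algebra R A]

lemma choose_sum_aux {M : Type*} [AddCommMonoid M] (f : ℕ → M) (k : ℕ) :
    (∑ j ∈ Finset.range (k+1), (k.choose j) • f (j+1))
      + (∑ j ∈ Finset.range (k+1), (k.choose j) • f j)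
    = ∑ j ∈ Finset.range (k+2), ((k+1).choose j) • f j := by
  rw [Finset.sum_range_succ' (fun j => ((k+1).choose j) • f j) (k+1)]
  simp only [Nat.choose_succ_succ, add_nsmul, Finset.sum_add_distrib, Nat.choose_zero_right,
    one_nsmul]
  rw [Finset.sum_range_succ' (fun j => (k.choose j) • f j) k]
  rw [Finset.sum_range_succ (fun j => (k.choose (j+1)) • f (j+1)) k]
  simp only [Nat.choose_succ_self, zero_nsmul, add_zero, Nat.choose_zero_right, one_nsmul]
  abel

lemma D_iter_mul (D : Derivation R A A) (φ ψ : A) :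
    ∀ k : ℕ, (⇑D)^[k] (φ * ψ)
      = ∑ j ∈ Finset.range (k+1), (k.choose j) • ((⇑D)^[j] φ * (⇑D)^[k-j] ψ)
  | 0 => by simp
  | (k+1) => by
    have hD : ∀ (n : ℕ) (x : A), D (n • x) = n • D x := fun n x => by
      induction n with
      | zero => simp
      | succ n ih => rw [succ_nsmul, succ_nsmul, map_add, ih]
    rw [Function.iterate_succ_apply', D_iter_mul D φ ψ k, map_sum]
    have hterm : ∀ j ∈ Finset.range (k+1),
        D ((k.choose j) • ((⇑D)^[j] φ * (⇑D)^[k-j] ψ))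
        = (k.choose j) • (D ((⇑D)^[j] φ) * (⇑D)^[k-j] ψ)
          + (k.choose j) • ((⇑D)^[j] φ * D ((⇑D)^[k-j] ψ)) := by
      intro j hj
      rw [hD, Derivation.leibniz, smul_eq_mul, smul_eq_mul, smul_add,
        mul_comm ((⇑D)^[k-j] ψ) (D ((⇑D)^[j] φ)), add_comm]
    rw [Finset.sum_congr rfl hterm, Finset.sum_add_distrib]
    have hA : ∀ j ∈ Finset.range (k+1),
        (k.choose j) • ((⇑D)^[j] φ * D ((⇑D)^[k-j] ψ))
        = (k.choose j) • ((⇑D)^[j] φ * (⇑D)^[k+1-j] ψ) := by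
      intro j hj
      rw [Finset.mem_range] at hj
      rw [← Function.iterate_succ_apply' D (k-j)]
      congr 3
      omega
    have hB : ∀ j ∈ Finset.range (k+1),
        (k.choose j) • (D ((⇑D)^[j] φ) * (⇑D)^[k-j] ψ)
        = (k.choose j) • ((⇑D)^[j+1] φ * (⇑D)^[k+1-(j+1)] ψ) := by
      intro j hj
      rw [← Function.iterate_succ_apply' D j]
      congr 3
      omega
    rw [Finset.sum_congr rfl hA, Finset.sum_congr rfl hB]
    exact choose_sum_aux (fun j => (⇑D)^[j] φ * (⇑D)^[k+1-j] ψ) k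

variable (D : Derivation R A A)

lemma iter_zero : ∀ j : ℕ, (⇑D)^[j] (0 : A) = 0
  | 0 => rfl
  | (j+1) => by rw [Function.iterate_succ_apply, map_zero, iter_zero j]

lemma iter_add (j : ℕ) (φ ψ : A) : (⇑D)^[j] (φ + ψ) = (⇑D)^[j] φ + (⇑D)^[j] ψ := by
  induction j generalizing φ ψ with
  | zero => rfl
  | succ j ih => simp only [Function.iterate_succ_apply, map_add, ih]

lemma iter_qsmul [Module ℚ A] (j : ℕ) (q : ℚ) (x : A) :
    (⇑D)^[j] (q • x) = q • (⇑D)^[j] x := by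
  induction j generalizing x with
  | zero => rfl
  | succ j ih =>
    rw [Function.iterate_succ_apply, Function.iterate_succ_apply, ← ih]
    congr 1
    exact map_rat_smul (D : A →ₗ[R] A) q x

lemma iter_neg [Module ℚ A] (j : ℕ) (x : A) :
    (⇑(-D))^[j] x = ((-1 : ℚ)^j) • (⇑D)^[j] x := by
  induction j generalizing x with
  | zero => simp
  | succ j ih =>
    rw [Function.iterate_succ_apply' (⇑(-D)) j, Function.iterate_succ_apply' (⇑D) j, ih]
    have hq : ∀ (q : ℚ) (y : A), D (q • y) = q • D y := fun q y =>
      map_rat_smul (D : A →ₗ[R] A) q y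
    rw [Derivation.neg_apply, hq, pow_succ, mul_smul, neg_one_smul, smul_neg]

lemma qfact_eq {n j : ℕ} (hj : j ≤ n) :
    ((j.factorial : ℚ))⁻¹ * (((n - j).factorial : ℚ))⁻¹
      = (n.choose j : ℚ) * ((n.factorial : ℚ))⁻¹ := by
  have h := Nat.choose_mul_factorial_mul_factorial hj
  have h' : ((n.choose j : ℚ)) * (j.factorial : ℚ) * ((n - j).factorial : ℚ)
      = (n.factorial : ℚ) := by exact_mod_cast congrArg (Nat.cast (R := ℚ)) h
  have hfj : (j.factorial : ℚ) ≠ 0 := Nat.cast_ne_zero.mpr (Nat.factorial_ne_zero j)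
  have hfnj : (((n - j).factorial : ℚ)) ≠ 0 := Nat.cast_ne_zero.mpr (Nat.factorial_ne_zero _)
  have hfn : ((n.factorial : ℚ)) ≠ 0 := Nat.cast_ne_zero.mpr (Nat.factorial_ne_zero n)
  field_simp
  linarith [h']

lemma a_mul [Module ℚ A] (φ ψ : A) (k : ℕ) :
    ((k.factorial : ℚ)⁻¹) • (⇑D)^[k] (φ * ψ)
    = ∑ p ∈ Finset.HasAntidiagonal.antidiagonal k,
        ((((p.1.factorial : ℚ))⁻¹) • (⇑D)^[p.1] φ) * ((((p.2.factorial : ℚ))⁻¹) • (⇑D)^[p.2] ψ) := by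
  rw [Finset.Nat.sum_antidiagonal_eq_sum_range_succ_mk, D_iter_mul D φ ψ k, Finset.smul_sum]
  apply Finset.sum_congr rfl
  intro j hj
  rw [Finset.mem_range, Nat.lt_succ_iff] at hj
  rw [smul_mul_smul_comm, ← Nat.cast_smul_eq_nsmul ℚ, smul_smul]
  congr 1
  rw [qfact_eq hj]
  ring

end DerIter

section G
variable {R : Type*} [CommRing R] [Algebra ℚ R] [UniformSpace R] [IsUniformAddGroup R]
  [CompleteSpace R] [T2Space R] [IsTopologicalRing R] {I : Ideal R}

/-- The `k`-th term of the exponential series. -/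
noncomputable def aterm (V : Derivation R (MvPowerSeries ℕ R) (MvPowerSeries ℕ R))
    (φ : MvPowerSeries ℕ R) (k : ℕ) : MvPowerSeries ℕ R :=
  ((k.factorial : ℚ)⁻¹) • (⇑V)^[k] φ

variable (V : Derivation R (MvPowerSeries ℕ R) (MvPowerSeries ℕ R))

lemma coeff_qsmul (q : ℚ) (f : MvPowerSeries ℕ R) (d : ℕ →₀ ℕ) :
    MvPowerSeries.coeff d (q • f) = q • MvPowerSeries.coeff d f := rfl

lemma coeff_aterm_mem (hVcont : Continuous V)
    (hVI : ∀ n : ℕ, ∀ d : ℕ →₀ ℕ, MvPowerSeries.coeff d (V (MvPowerSeries.X n)) ∈ I)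
    (φ : MvPowerSeries ℕ R) (k : ℕ) (d : ℕ →₀ ℕ) :
    MvPowerSeries.coeff d (aterm V φ k) ∈ (I ^ k).closure := by
  rw [aterm, coeff_qsmul]
  refine smul_mem_cl _ ?_
  have := coeff_D_iter V hVcont hVI k 0 φ (coeff_mem_cl_zero φ) d
  rwa [zero_add] at this

variable (hlin : LinearlyTopologized R)
  (hI : ∀ S ∈ nhds (0 : R), ∃ n : ℕ, ((I ^ n : Ideal R) : Set R) ⊆ S)
  (hVcont : Continuous V)
  (hVI : ∀ n : ℕ, ∀ d : ℕ →₀ ℕ, MvPowerSeries.coeff d (V (MvPowerSeries.X n)) ∈ I)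

include hlin hI hVcont hVI

lemma summable_aterm (φ : MvPowerSeries ℕ R) : Summable (aterm V φ) :=
  exists_hasSum hlin hI (aterm V φ) id (fun k d => coeff_aterm_mem V hVcont hVI φ k d)
    (by rw [Nat.cofinite_eq_atTop]; exact tendsto_id)

/-- The exponential of the derivation `V`, applied to `φ`. -/
noncomputable def expD (φ : MvPowerSeries ℕ R) : MvPowerSeries ℕ R := ∑' k, aterm V φ k

lemma hasSum_expD (φ : MvPowerSeries ℕ R) :
    HasSum (aterm V φ) (expD V φ) :=
  (summable_aterm V hlin hI hVcont hVI φ).hasSum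

omit hlin hI hVcont hVI in
lemma tendsto_add_cofinite : Tendsto (fun p : ℕ × ℕ => p.1 + p.2) cofinite atTop := by
  rw [Filter.tendsto_atTop]
  intro b
  rw [Filter.eventually_cofinite]
  apply Set.Finite.subset ((Set.finite_Iio b).prod (Set.finite_Iio b))
  intro p hp
  simp only [Set.mem_setOf_eq, not_le] at hp
  exact ⟨by simp [Set.mem_Iio]; omega, by simp [Set.mem_Iio]; omega⟩

omit hlin hI hVI in
lemma neg_cont : Continuous ⇑(-V) := by
  rw [Derivation.coe_neg]; exact hVcont.neg

omit hlin hI hVcont in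
lemma neg_mem_I : ∀ n : ℕ, ∀ d : ℕ →₀ ℕ,
    MvPowerSeries.coeff d ((-V) (MvPowerSeries.X n)) ∈ I := by
  intro n d
  rw [Derivation.neg_apply, map_neg]
  exact neg_mem (hVI n d)

/-- expD is multiplicative. -/
lemma expD_mul (φ ψ : MvPowerSeries ℕ R) :
    expD V (φ * ψ) = expD V φ * expD V ψ := by
  classical
  set c : ℕ × ℕ → MvPowerSeries ℕ R := fun p => aterm V φ p.1 * aterm V ψ p.2 with hc
  have hbound : ∀ p : ℕ × ℕ, ∀ d, MvPowerSeries.coeff d (c p) ∈ (I ^ (p.1 + p.2)).closure := by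
    intro p d
    rw [hc, MvPowerSeries.coeff_mul]
    refine Submodule.sum_mem _ fun q hq => ?_
    exact mem_cl_mul (coeff_aterm_mem V hVcont hVI φ p.1 q.1)
      (coeff_aterm_mem V hVcont hVI ψ p.2 q.2)
  obtain ⟨T, hT⟩ := exists_hasSum hlin hI c (fun p => p.1 + p.2) hbound tendsto_add_cofinite
  -- identify T with (expD V φ) * (expD V ψ)
  have hfib : ∀ j : ℕ, HasSum (fun k => c (j, k)) (aterm V φ j * expD V ψ) := by
    intro j
    exact (hasSum_expD V hlin hI hVcont hVI ψ).map
      (AddMonoidHom.mulLeft (aterm V φ j)) (continuous_mul_left' _)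
  have h1 : HasSum (fun j => aterm V φ j * expD V ψ) T := hT.prod_fiberwise hfib
  have h2 : HasSum (fun j => aterm V φ j * expD V ψ) (expD V φ * expD V ψ) :=
    (hasSum_expD V hlin hI hVcont hVI φ).map
      (AddMonoidHom.mulRight (expD V ψ)) (continuous_mul_right' _)
  have hTval : T = expD V φ * expD V ψ := h1.unique h2
  -- identify T with expD V (φ * ψ) via antidiagonal grouping
  have hsig : HasSum (c ∘ ⇑(Finset.HasAntidiagonal.sigmaAntidiagonalEquivProd (A := ℕ))) T :=
    (Equiv.hasSum_iff _).mpr hT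
  have hfib2 : ∀ n : ℕ, HasSum
      (fun p : (Finset.HasAntidiagonal.antidiagonal n : Finset (ℕ × ℕ)) =>
        (c ∘ ⇑(Finset.HasAntidiagonal.sigmaAntidiagonalEquivProd (A := ℕ))) ⟨n, p⟩)
      (∑ p ∈ Finset.HasAntidiagonal.antidiagonal n, c p) := by
    intro n
    have h0 : (fun p : (Finset.HasAntidiagonal.antidiagonal n : Finset (ℕ × ℕ)) =>
        (c ∘ ⇑(Finset.HasAntidiagonal.sigmaAntidiagonalEquivProd (A := ℕ))) ⟨n, p⟩)
        = fun p : (Finset.HasAntidiagonal.antidiagonal n : Finset (ℕ × ℕ)) => c ↑p := rfl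
    rw [h0, ← Finset.sum_coe_sort]
    exact hasSum_fintype _
  have hgrp : HasSum (fun n => ∑ p ∈ Finset.HasAntidiagonal.antidiagonal n, c p) T := hsig.sigma hfib2
  have heq : (fun n => ∑ p ∈ Finset.HasAntidiagonal.antidiagonal n, c p) = aterm V (φ * ψ) := by
    funext n
    rw [hc]
    exact (a_mul V φ ψ n).symm
  rw [heq] at hgrp
  have h3 : expD V (φ * ψ) = T := (hasSum_expD V hlin hI hVcont hVI (φ * ψ)).unique hgrp
  rw [h3, hTval]

omit hlin hI hVcont hVI in
lemma aterm_add (φ ψ : MvPowerSeries ℕ R) (k : ℕ) :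
    aterm V (φ + ψ) k = aterm V φ k + aterm V ψ k := by
  rw [aterm, aterm, aterm, iter_add, smul_add]

omit hlin hI hVcont hVI in
lemma aterm_one : aterm V (1 : MvPowerSeries ℕ R)
    = fun k => if k = 0 then (1 : MvPowerSeries ℕ R) else 0 := by
  funext k
  cases k with
  | zero => simp [aterm]
  | succ k =>
    simp [aterm, Function.iterate_succ_apply, Derivation.map_one_eq_zero, iter_zero]

lemma expD_add (φ ψ : MvPowerSeries ℕ R) :
    expD V (φ + ψ) = expD V φ + expD V ψ := by
  refine (hasSum_expD V hlin hI hVcont hVI (φ + ψ)).unique ?_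
  have h := (hasSum_expD V hlin hI hVcont hVI φ).add (hasSum_expD V hlin hI hVcont hVI ψ)
  have he : (fun k => aterm V φ k + aterm V ψ k) = aterm V (φ + ψ) := by
    funext k; rw [aterm_add V]
  rwa [he] at h

lemma expD_one : expD V (1 : MvPowerSeries ℕ R) = 1 := by
  refine (hasSum_expD V hlin hI hVcont hVI 1).unique ?_
  rw [aterm_one V]
  exact hasSum_ite_eq 0 1

omit hlin hI in
lemma antidiag_neg_sum (n : ℕ) (φ : MvPowerSeries ℕ R) :
    ∑ p ∈ Finset.HasAntidiagonal.antidiagonal n, aterm (-V) (aterm V φ p.2) p.1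
      = if n = 0 then φ else 0 := by
  classical
  have hterm : ∀ p ∈ Finset.HasAntidiagonal.antidiagonal n, aterm (-V) (aterm V φ p.2) p.1
      = (((-1 : ℚ)^p.1 * ((p.1.factorial : ℚ))⁻¹ * ((p.2.factorial : ℚ))⁻¹)) • (⇑V)^[n] φ := by
    intro p hp
    rw [Finset.HasAntidiagonal.mem_antidiagonal] at hp
    rw [aterm, aterm, iter_qsmul (-V), iter_neg, ← Function.iterate_add_apply, hp,
      smul_smul, smul_smul]
    congr 1
    ring
  rw [Finset.sum_congr rfl hterm, ← Finset.sum_smul]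
  have hcoef : (∑ p ∈ Finset.HasAntidiagonal.antidiagonal n,
      (-1 : ℚ)^p.1 * ((p.1.factorial : ℚ))⁻¹ * ((p.2.factorial : ℚ))⁻¹)
      = if n = 0 then 1 else 0 := by
    rw [Finset.Nat.sum_antidiagonal_eq_sum_range_succ_mk]
    have hstep : ∀ j ∈ Finset.range (n + 1),
        (-1 : ℚ)^j * ((j.factorial : ℚ))⁻¹ * (((n - j).factorial : ℚ))⁻¹
        = ((-1 : ℚ)^j * (n.choose j : ℚ)) * ((n.factorial : ℚ))⁻¹ := by
      intro j hj
      rw [Finset.mem_range, Nat.lt_succ_iff] at hj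
      rw [mul_assoc, qfact_eq hj]
      ring
    rw [Finset.sum_congr rfl hstep, ← Finset.sum_mul]
    have hint := Int.alternating_sum_range_choose (n := n)
    have hQ : (∑ j ∈ Finset.range (n + 1), ((-1 : ℚ)^j * (n.choose j : ℚ)))
        = if n = 0 then 1 else 0 := by
      have := congrArg (fun z : ℤ => (z : ℚ)) hint
      push_cast at this
      rw [this]
    rw [hQ]
    by_cases h : n = 0 <;> simp [h]
  rw [hcoef]
  by_cases h : n = 0
  · subst h; simp
  · simp [h]

lemma expD_neg_comp (φ : MvPowerSeries ℕ R) :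
    expD (-V) (expD V φ) = φ := by
  classical
  have hWc := neg_cont V hVcont
  have hWI := neg_mem_I V hVI
  set c : ℕ × ℕ → MvPowerSeries ℕ R := fun p => aterm (-V) (aterm V φ p.2) p.1 with hc
  have hbound : ∀ p : ℕ × ℕ, ∀ d, MvPowerSeries.coeff d (c p) ∈ (I ^ (p.1 + p.2)).closure := by
    intro p d
    rw [hc]
    show MvPowerSeries.coeff d
      (((p.1.factorial : ℚ)⁻¹) • (⇑(-V))^[p.1] (aterm V φ p.2)) ∈ (I ^ (p.1 + p.2)).closure
    rw [coeff_qsmul]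
    refine smul_mem_cl _ ?_
    have := coeff_D_iter (-V) hWc hWI p.1 p.2 (aterm V φ p.2)
      (fun d' => coeff_aterm_mem V hVcont hVI φ p.2 d') d
    rwa [add_comm p.2 p.1] at this
  obtain ⟨T, hT⟩ := exists_hasSum hlin hI c (fun p => p.1 + p.2) hbound tendsto_add_cofinite
  have hfib : ∀ j : ℕ, HasSum (fun k => c (j, k)) (aterm (-V) (expD V φ) j) := by
    intro j
    exact (hasSum_expD V hlin hI hVcont hVI φ).map
      (AddMonoidHom.mk' (fun x => ((j.factorial : ℚ)⁻¹) • (⇑(-V))^[j] x)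
        (fun x y => by simp only [iter_add, smul_add]))
      ((continuous_smul_q _).comp (hWc.iterate j))
  have h1 : HasSum (fun j => aterm (-V) (expD V φ) j) T := hT.prod_fiberwise hfib
  have h2 : HasSum (fun j => aterm (-V) (expD V φ) j) (expD (-V) (expD V φ)) :=
    hasSum_expD (-V) hlin hI hWc hWI (expD V φ)
  have hTval : expD (-V) (expD V φ) = T := h2.unique h1
  have hsig : HasSum (c ∘ ⇑(Finset.HasAntidiagonal.sigmaAntidiagonalEquivProd (A := ℕ))) T :=
    (Equiv.hasSum_iff _).mpr hT
  have hfib2 : ∀ n : ℕ, HasSum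
      (fun p : (Finset.HasAntidiagonal.antidiagonal n : Finset (ℕ × ℕ)) =>
        (c ∘ ⇑(Finset.HasAntidiagonal.sigmaAntidiagonalEquivProd (A := ℕ))) ⟨n, p⟩)
      (∑ p ∈ Finset.HasAntidiagonal.antidiagonal n, c p) := by
    intro n
    have h0 : (fun p : (Finset.HasAntidiagonal.antidiagonal n : Finset (ℕ × ℕ)) =>
        (c ∘ ⇑(Finset.HasAntidiagonal.sigmaAntidiagonalEquivProd (A := ℕ))) ⟨n, p⟩)
        = fun p : (Finset.HasAntidiagonal.antidiagonal n : Finset (ℕ × ℕ)) => c ↑p := rfl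
    rw [h0, ← Finset.sum_coe_sort]
    exact hasSum_fintype _
  have hgrp : HasSum (fun n => ∑ p ∈ Finset.HasAntidiagonal.antidiagonal n, c p) T := hsig.sigma hfib2
  have heq : (fun n => ∑ p ∈ Finset.HasAntidiagonal.antidiagonal n, c p)
      = fun n => if n = 0 then φ else 0 := by
    funext n
    rw [hc]
    exact antidiag_neg_sum V hVcont hVI n φ
  rw [heq] at hgrp
  have hfin : HasSum (fun n => if n = 0 then φ else (0 : MvPowerSeries ℕ R)) φ :=
    hasSum_ite_eq 0 φ
  rw [hTval]
  exact hgrp.unique hfin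

lemma continuous_expD : Continuous (expD V (R := R)) := by
  apply continuous_pi
  intro d
  have hFcont : ∀ N : ℕ, Continuous (fun φ : MvPowerSeries ℕ R =>
      ∑ k ∈ Finset.range N, MvPowerSeries.coeff d (aterm V φ k)) := by
    intro N
    apply continuous_finset_sum
    intro k _
    exact (continuous_coeff d).comp ((continuous_smul_q _).comp (hVcont.iterate k))
  have hTU : TendstoUniformly
      (fun N (φ : MvPowerSeries ℕ R) => ∑ k ∈ Finset.range N, MvPowerSeries.coeff d (aterm V φ k))
      (fun φ => MvPowerSeries.coeff d (expD V φ)) atTop := by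
    intro u hu
    rw [uniformity_eq_comap_nhds_zero R] at hu
    obtain ⟨S, hS, hSu⟩ := hu
    obtain ⟨K, hKS, hK⟩ := hlin S hS
    have hKclosed : IsClosed (K : Set R) :=
      (OpenAddSubgroup.mk K.toAddSubgroup (AddSubgroup.isOpen_of_mem_nhds _ hK)).isClosed
    obtain ⟨n, hn⟩ := hI K hK
    filter_upwards [Filter.eventually_ge_atTop n] with N hN
    intro φ
    apply hSu
    have hs : Summable (fun k => MvPowerSeries.coeff d (aterm V φ k)) :=
      ((hasSum_coeff_iff _ _).mp (hasSum_expD V hlin hI hVcont hVI φ) d).summable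
    have hval : (∑' k, MvPowerSeries.coeff d (aterm V φ k))
        = MvPowerSeries.coeff d (expD V φ) :=
      ((hasSum_coeff_iff _ _).mp (hasSum_expD V hlin hI hVcont hVI φ) d).tsum_eq
    have hgN0 : HasSum
        (fun k => if k ∈ Finset.range N then MvPowerSeries.coeff d (aterm V φ k) else 0)
        (∑ k ∈ Finset.range N,
          if k ∈ Finset.range N then MvPowerSeries.coeff d (aterm V φ k) else 0) :=
      hasSum_sum_of_ne_finset_zero (by intro b hb; simp [hb])
    have hsumeq : (∑ k ∈ Finset.range N,
          if k ∈ Finset.range N then MvPowerSeries.coeff d (aterm V φ k) else 0)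
        = ∑ k ∈ Finset.range N, MvPowerSeries.coeff d (aterm V φ k) :=
      Finset.sum_congr rfl (fun b hb => by simp [hb])
    rw [hsumeq] at hgN0
    have hdiffsum : HasSum
        (fun k => MvPowerSeries.coeff d (aterm V φ k)
          - (if k ∈ Finset.range N then MvPowerSeries.coeff d (aterm V φ k) else 0))
        ((∑' k, MvPowerSeries.coeff d (aterm V φ k))
          - ∑ k ∈ Finset.range N, MvPowerSeries.coeff d (aterm V φ k)) :=
      hs.hasSum.sub hgN0
    have htmem : ((∑' k, MvPowerSeries.coeff d (aterm V φ k))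
        - ∑ k ∈ Finset.range N, MvPowerSeries.coeff d (aterm V φ k)) ∈ (I ^ N).closure := by
      refine hasSum_mem_ideal hdiffsum ((I ^ N).closure) (isClosed_cl N) ?_
      intro k
      by_cases hk : k ∈ Finset.range N
      · simp only [hk, if_pos, sub_self]
        exact zero_mem _
      · simp only [hk, if_neg, not_false_iff, sub_zero]
        have hkN : N ≤ k := by simpa [Finset.mem_range, not_lt] using hk
        exact closure_mono (Ideal.pow_le_pow_right hkN) (coeff_aterm_mem V hVcont hVI φ k d)
    have htK : ((∑' k, MvPowerSeries.coeff d (aterm V φ k))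
        - ∑ k ∈ Finset.range N, MvPowerSeries.coeff d (aterm V φ k)) ∈ (K : Set R) := by
      refine closure_minimal ?_ hKclosed htmem
      exact subset_trans (Ideal.pow_le_pow_right hN) hn
    show ((fun x : R × R => x.2 - x.1) (MvPowerSeries.coeff d (expD V φ),
      ∑ k ∈ Finset.range N, MvPowerSeries.coeff d (aterm V φ k))) ∈ S
    have hdiff : (∑ k ∈ Finset.range N, MvPowerSeries.coeff d (aterm V φ k))
        - MvPowerSeries.coeff d (expD V φ)
        = -((∑' k, MvPowerSeries.coeff d (aterm V φ k))
          - ∑ k ∈ Finset.range N, MvPowerSeries.coeff d (aterm V φ k)) := by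
      rw [← hval]
      ring
    simp only
    rw [hdiff]
    exact hKS (neg_mem htK)
  exact hTU.continuous (Filter.Eventually.of_forall hFcont).frequently

end G

end ExpAux

/-- exponential of a small derivation.  Let `R` be a complete Hausdorff
linearly topologized ring (a ℚ-algebra), `I ⊆ R` an ideal such that every neighbourhood
of `0` contains some power `I^n`, and `V` a continuous derivation of `R[[x]]`
(countably many variables) whose components `V(x_n)` have all coefficients in `I` and
tend to `0`.  Then for every `φ` the series `exp(V)(φ) = Σ_k V^k(φ)/k!` converges in
`R[[x]]`, and `φ ↦ exp(V)(φ)` is a continuous ring automorphism of `R[[x]]` whose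
inverse is `exp(−V)`. -/
theorem exp_of_derivation_is_automorphism
    (R : Type*) [CommRing R] [Algebra ℚ R] [UniformSpace R] [IsUniformAddGroup R]
    [CompleteSpace R] [T2Space R] [IsTopologicalRing R]
    (hlin : LinearlyTopologized R)
    (I : Ideal R)
    (hI : ∀ S ∈ nhds (0 : R), ∃ n : ℕ, ((I ^ n : Ideal R) : Set R) ⊆ S)
    (V : Derivation R (MvPowerSeries ℕ R) (MvPowerSeries ℕ R))
    (hVcont : Continuous V)
    (hVtend : Tendsto (fun n => V (MvPowerSeries.X n)) atTop (nhds 0))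
    (hVI : ∀ n : ℕ, ∀ d : ℕ →₀ ℕ, MvPowerSeries.coeff d (V (MvPowerSeries.X n)) ∈ I) :
    (∀ φ : MvPowerSeries ℕ R,
      ∃ s, HasSum (fun k : ℕ => ((k.factorial : ℚ)⁻¹) • (⇑V)^[k] φ) s) ∧
    ∃ E E' : MvPowerSeries ℕ R →+* MvPowerSeries ℕ R,
      Continuous E ∧ Continuous E' ∧
      (∀ φ, HasSum (fun k : ℕ => ((k.factorial : ℚ)⁻¹) • (⇑V)^[k] φ) (E φ)) ∧
      (∀ φ, HasSum (fun k : ℕ => ((k.factorial : ℚ)⁻¹) • (⇑(-V))^[k] φ) (E' φ)) ∧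
      E'.comp E = RingHom.id (MvPowerSeries ℕ R) ∧
      E.comp E' = RingHom.id (MvPowerSeries ℕ R) := by
  have hWc : Continuous ⇑(-V) := ExpAux.neg_cont V hVcont
  have hWI : ∀ n : ℕ, ∀ d : ℕ →₀ ℕ,
      MvPowerSeries.coeff d ((-V) (MvPowerSeries.X n)) ∈ I := ExpAux.neg_mem_I V hVI
  refine ⟨fun φ => ⟨ExpAux.expD V φ, ExpAux.hasSum_expD V hlin hI hVcont hVI φ⟩, ?_⟩
  refine ⟨RingHom.mk' ⟨⟨ExpAux.expD V, ExpAux.expD_one V hlin hI hVcont hVI⟩,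
      ExpAux.expD_mul V hlin hI hVcont hVI⟩ (ExpAux.expD_add V hlin hI hVcont hVI),
    RingHom.mk' ⟨⟨ExpAux.expD (-V), ExpAux.expD_one (-V) hlin hI hWc hWI⟩,
      ExpAux.expD_mul (-V) hlin hI hWc hWI⟩ (ExpAux.expD_add (-V) hlin hI hWc hWI),
    ExpAux.continuous_expD V hlin hI hVcont hVI,
    ExpAux.continuous_expD (-V) hlin hI hWc hWI,
    fun φ => ExpAux.hasSum_expD V hlin hI hVcont hVI φ,
    fun φ => ExpAux.hasSum_expD (-V) hlin hI hWc hWI φ,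
    ?_, ?_⟩
  · refine RingHom.ext fun φ => ?_
    exact ExpAux.expD_neg_comp V hlin hI hVcont hVI φ
  · refine RingHom.ext fun φ => ?_
    have := ExpAux.expD_neg_comp (-V) hlin hI hWc hWI φ
    rwa [neg_neg] at this
end
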